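/- The preference graph of any strict two-player zero-sum finite game has exactly one sink equilibrium. -/
import Mathlib


/-- Profiles differing only in player 1's strategy. -/
def IComp1 {A B : Type*} (p q : A × B) : Prop := p.1 ≠ q.1 ∧ p.2 = q.2

/-- Profiles differing only in player 2's strategy. -/
def IComp2 {A B : Type*} (p q : A × B) : Prop := p.1 = q.1 ∧ p.2 ≠ q.2

/-- A two-player game is strict if comparable profiles never give the deviating player
equal payoff. -/
def Strict2 {A B : Type*} (u1 u2 : A × B → ℝ) : Prop :=
  (∀ p q, IComp1 p q → u1 p ≠ u1 q) ∧ (∀ p q, IComp2 p q → u2 p ≠ u2 q)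

/-- Arc of the preference graph of a two-player game. -/
def Arc2 {A B : Type*} (u1 u2 : A × B → ℝ) (p q : A × B) : Prop :=
  (IComp1 p q ∧ u1 p < u1 q) ∨ (IComp2 p q ∧ u2 p < u2 q)

/-- A two-player game is zero-sum if the utilities sum to zero at every profile. -/
def ZeroSum2 {A B : Type*} (u1 u2 : A × B → ℝ) : Prop := ∀ p, u1 p + u2 p = 0

/-- A sink equilibrium of a directed graph (given by its arc relation `A`): a nonempty
set of nodes that is closed under arcs and in which every node can reach every other
by a directed path.  (Such a set is exactly a strongly connected component with no
outgoing arcs.) -/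
def IsSinkEqG {α : Type*} (A : α → α → Prop) (C : Set α) : Prop :=
  C.Nonempty ∧ (∀ p ∈ C, ∀ q, A p q → q ∈ C) ∧
    ∀ p ∈ C, ∀ q ∈ C, Relation.ReflTransGen A p q

/-- The preference graph of a strict two-player zero-sum finite game has exactly one
sink equilibrium. -/
theorem zero_sum_unique_sink_equilibrium {A B : Type*}
    [Fintype A] [Fintype B] [Nonempty A] [Nonempty B]
    (u1 u2 : A × B → ℝ) (hz : ZeroSum2 u1 u2) (hs : Strict2 u1 u2) :
    ∃! C : Set (A × B), IsSinkEqG (Arc2 u1 u2) C := by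

  classical
  -- u1 is also strict across player-2 deviations, by zero-sum
  have hs2 : ∀ p q : A × B, IComp2 p q → u1 p ≠ u1 q := by
    intro p q h hne
    exact hs.2 p q h (by have h1 := hz p; have h2 := hz q; linarith)
  obtain ⟨amax, ham⟩ : ∃ amax : B → A, ∀ b a, u1 (a, b) ≤ u1 (amax b, b) := by
    choose amax ham using fun b => Finite.exists_max (fun a : A => u1 (a, b))
    exact ⟨amax, fun b a => ham b a⟩
  obtain ⟨b0, hb0⟩ : ∃ b0, ∀ b, u1 (amax b0, b0) ≤ u1 (amax b, b) :=
    Finite.exists_min (fun b => u1 (amax b, b))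
  set z : A × B := (amax b0, b0) with hzdef
  have reach : ∀ p, Relation.ReflTransGen (Arc2 u1 u2) p z := by
    rintro ⟨a, b⟩
    have step1 : Relation.ReflTransGen (Arc2 u1 u2) (a, b) (amax b, b) := by
      rcases eq_or_ne a (amax b) with h | h
      · rw [h]
      · exact Relation.ReflTransGen.single
          (Or.inl ⟨⟨h, rfl⟩, lt_of_le_of_ne (ham b a) (hs.1 _ _ ⟨h, rfl⟩)⟩)
    have step2 : Relation.ReflTransGen (Arc2 u1 u2) (amax b, b) (amax b, b0) := by
      rcases eq_or_ne b b0 with h | h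
      · rw [h]
      · refine Relation.ReflTransGen.single (Or.inr ⟨⟨rfl, h⟩, ?_⟩)
        have h1 : u1 (amax b, b0) ≤ u1 (amax b0, b0) := ham b0 _
        have h2 : u1 (amax b0, b0) ≤ u1 (amax b, b) := hb0 b
        have hne : u1 (amax b, b) ≠ u1 (amax b, b0) := hs2 _ _ ⟨rfl, h⟩
        have hlt : u1 (amax b, b0) < u1 (amax b, b) :=
          lt_of_le_of_ne (le_trans h1 h2) fun e => hne e.symm
        have e1 := hz (amax b, b); have e2 := hz (amax b, b0)
        linarith
    have step3 : Relation.ReflTransGen (Arc2 u1 u2) (amax b, b0) z := by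
      rcases eq_or_ne (amax b) (amax b0) with h | h
      · rw [hzdef, ← h]
      · exact Relation.ReflTransGen.single
          (Or.inl ⟨⟨h, rfl⟩, lt_of_le_of_ne (ham b0 _) (hs.1 _ _ ⟨h, rfl⟩)⟩)
    exact step1.trans (step2.trans step3)
  refine ⟨{q | Relation.ReflTransGen (Arc2 u1 u2) z q},
    ⟨⟨z, Relation.ReflTransGen.refl⟩, ?_, ?_⟩, ?_⟩
  · intro p hp q hq; exact hp.tail hq
  · intro p _ q hq; exact (reach p).trans hq
  · rintro C ⟨⟨c, hc⟩, hclosed, hconn⟩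
    have hrt : ∀ p ∈ C, ∀ q, Relation.ReflTransGen (Arc2 u1 u2) p q → q ∈ C := by
      intro p hp q h
      induction h with
      | refl => exact hp
      | tail _ h2 ih => exact hclosed _ ih _ h2
    have hzC : z ∈ C := hrt c hc z (reach c)
    ext q
    constructor
    · intro hq; exact hconn z hzC q hq
    · intro hq; exact hrt z hzC q hq
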